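/- If U' →_{R_S} V' by one of the rules of the form (C1), (C3), (C4) or (C5), then φ(U') ≠ φ(V'). -/

import Mathlib

/-- A rewriting system: every rule has nonempty left- and right-hand sides. -/
def IsRWS {α : Type*} (R : Set (List α × List α)) : Prop :=
  ∀ r ∈ R, r.1 ≠ [] ∧ r.2 ≠ []

/-- One-step reduction `W₁ →_R W₂`. -/
def Step {α : Type*} (R : Set (List α × List α)) (W₁ W₂ : List α) : Prop :=
  ∃ Z₁ Z₂ X Y, (X, Y) ∈ R ∧ W₁ = Z₁ ++ X ++ Z₂ ∧ W₂ = Z₁ ++ Y ++ Z₂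

/-- `→*_R`: the reflexive-transitive closure of one-step reduction. -/
def Steps {α : Type*} (R : Set (List α × List α)) : List α → List α → Prop :=
  Relation.ReflTransGen (Step R)

/-- Noetherian: no infinite reduction sequence. -/
def Noetherian {α : Type*} (R : Set (List α × List α)) : Prop :=
  ¬ ∃ g : ℕ → List α, ∀ i, Step R (g i) (g (i + 1))

/-- Confluence. -/
def Confluent {α : Type*} (R : Set (List α × List α)) : Prop :=
  ∀ U V W, Steps R U V → Steps R U W → ∃ X, Steps R V X ∧ Steps R W X

/-- Complete rewriting system: Noetherian and confluent. -/
def CompleteRWS {α : Type*} (R : Set (List α × List α)) : Prop :=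
  Noetherian R ∧ Confluent R

/-- `Irr R W`: `W ∈ A⁺` has no factor which is the left-hand side of a rule. -/
def Irr {α : Type*} (R : Set (List α × List α)) (W : List α) : Prop :=
  W ≠ [] ∧ ¬ ∃ Z₁ X Z₂, (∃ Y, (X, Y) ∈ R) ∧ W = Z₁ ++ X ++ Z₂

/-- `Presents R f`: the map sending a nonempty word `u` over `α` to `f u` exhibits the
semigroup `S` as the semigroup presented by `[α; R]`, i.e. the semigroup `A⁺/↔*_R`:
`f` restricted to nonempty words is a surjective semigroup homomorphism whose kernel
is the congruence `↔*_R` generated by `R` (the value of `f` on the empty word is irrelevant). -/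
def Presents {α S : Type*} [Semigroup S] (R : Set (List α × List α)) (f : List α → S) : Prop :=
  (∀ u v : List α, u ≠ [] → v ≠ [] → f (u ++ v) = f u * f v) ∧
  (∀ x : S, ∃ u : List α, u ≠ [] ∧ f u = x) ∧
  (∀ u v : List α, u ≠ [] → v ≠ [] → (f u = f v ↔ Relation.EqvGen (Step R) u v))

/-- `S` has a finite complete rewriting system. -/
def HasFCRS (S : Type*) [Semigroup S] : Prop :=
  ∃ (α : Type) (R : Set (List α × List α)) (f : List α → S),
    Finite α ∧ R.Finite ∧ IsRWS R ∧ CompleteRWS R ∧ Presents R f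

/-! ### The construction of Section 3: adjoining a letter `s` with `φ(s) = W₀`.
The alphabet `B = A ∪ {s}` is modelled as `α ⊕ Unit`, with `Sum.inl a` the letter
`a ∈ A` and `Sum.inr ()` the new letter `s`. -/

/-- The homomorphism `φ : B* → A*` with `φ(a) = a` for `a ∈ A` and `φ(s) = W₀`. -/
def phiS {α : Type*} (W₀ : List α) (l : List (α ⊕ Unit)) : List α :=
  l.flatMap (Sum.elim (fun a => [a]) (fun _ => W₀))

open scoped Classical in
/-- The function `ρ : A* → B*`: `ρ(ε) = ε`; if `W = X₁W₀` ends with `W₀` then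
`ρ(W) = ρ(X₁)s`; otherwise `W = X₂a` with `a ∈ A` and `ρ(W) = ρ(X₂)a`. -/
noncomputable def rhoS {α : Type*} (W₀ : List α) (W : List α) : List (α ⊕ Unit) :=
  if hW : W = [] then []
  else if h : W₀ ≠ [] ∧ W₀ <:+ W then
    rhoS W₀ (W.take (W.length - W₀.length)) ++ [Sum.inr ()]
  else
    rhoS W₀ W.dropLast ++ [Sum.inl (W.getLast hW)]
termination_by W.length
decreasing_by
  · have h1 : W₀.length ≤ W.length := h.2.length_le
    have h2 : 0 < W₀.length := List.length_pos_iff.mpr h.1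
    simp only [List.length_take]
    omega
  · have h3 : 0 < W.length := List.length_pos_iff.mpr hW
    simp only [List.length_dropLast]
    omega

/-- Rules of the form (C1): `ρ(X) → ρ(Y)` for each rule `X → Y` of `R`. -/
def C1 {α : Type*} (R : Set (List α × List α)) (W₀ : List α) :
    Set (List (α ⊕ Unit) × List (α ⊕ Unit)) :=
  {p | ∃ X Y : List α, (X, Y) ∈ R ∧ p = (rhoS W₀ X, rhoS W₀ Y)}

/-- The rule (C2): `W₀ → s`. -/
def C2 {α : Type*} (W₀ : List α) : Set (List (α ⊕ Unit) × List (α ⊕ Unit)) :=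
  {p | p = (W₀.map Sum.inl, [Sum.inr ()])}

/-- Rules of the form (C3): for each rule `X₁X₂ → Y₁` of `R` with `W₀ = Z₁X₁`
(`X₁, Y₁ ∈ A⁺`, `X₂, Z₁ ∈ A*`), the rule `ρ(Z₁X₁X₂) → ρ(Y₁')` where
`Z₁X₁X₂ →*_R Y₁' ∈ Irr(R)`. -/
def C3 {α : Type*} (R : Set (List α × List α)) (W₀ : List α) :
    Set (List (α ⊕ Unit) × List (α ⊕ Unit)) :=
  {p | ∃ X₁ X₂ Y₁ Z₁ Y₁' : List α, X₁ ≠ [] ∧ Y₁ ≠ [] ∧ (X₁ ++ X₂, Y₁) ∈ R ∧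
    W₀ = Z₁ ++ X₁ ∧ Steps R (Z₁ ++ X₁ ++ X₂) Y₁' ∧ Irr R Y₁' ∧
    p = (rhoS W₀ (Z₁ ++ X₁ ++ X₂), rhoS W₀ Y₁')}

/-- Rules of the form (C4): for each rule `X₂X₁ → Y₁` of `R` with `W₀ = X₁Z₁`
(`X₁, Y₁ ∈ A⁺`, `X₂, Z₁ ∈ A*`), the rule `ρ(X₂X₁Z₁) → ρ(Y₁')` where
`X₂X₁Z₁ →*_R Y₁' ∈ Irr(R)`. -/
def C4 {α : Type*} (R : Set (List α × List α)) (W₀ : List α) :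
    Set (List (α ⊕ Unit) × List (α ⊕ Unit)) :=
  {p | ∃ X₁ X₂ Y₁ Z₁ Y₁' : List α, X₁ ≠ [] ∧ Y₁ ≠ [] ∧ (X₂ ++ X₁, Y₁) ∈ R ∧
    W₀ = X₁ ++ Z₁ ∧ Steps R (X₂ ++ X₁ ++ Z₁) Y₁' ∧ Irr R Y₁' ∧
    p = (rhoS W₀ (X₂ ++ X₁ ++ Z₁), rhoS W₀ Y₁')}

/-- Rules of the form (C5): for each rule `X₂X₃X₄ → Y₁` of `R` with `W₀ = X₄X₅ = X₁X₂`
(`X₂, X₄, Y₁ ∈ A⁺`, `X₁, X₃, X₅ ∈ A*`), the rule `ρ(X₁X₂X₃X₄X₅) → ρ(Y₁')` where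
`X₁X₂X₃X₄X₅ →*_R Y₁' ∈ Irr(R)`. -/
def C5 {α : Type*} (R : Set (List α × List α)) (W₀ : List α) :
    Set (List (α ⊕ Unit) × List (α ⊕ Unit)) :=
  {p | ∃ X₁ X₂ X₃ X₄ X₅ Y₁ Y₁' : List α, X₂ ≠ [] ∧ X₄ ≠ [] ∧ Y₁ ≠ [] ∧
    (X₂ ++ X₃ ++ X₄, Y₁) ∈ R ∧ W₀ = X₄ ++ X₅ ∧ W₀ = X₁ ++ X₂ ∧
    Steps R (X₁ ++ X₂ ++ X₃ ++ X₄ ++ X₅) Y₁' ∧ Irr R Y₁' ∧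
    p = (rhoS W₀ (X₁ ++ X₂ ++ X₃ ++ X₄ ++ X₅), rhoS W₀ Y₁')}

/-- Rules of the form (C6): `sX₃ → X₁s` whenever `W₀ = X₁X₂ = X₂X₃` with
`X₁, X₂, X₃ ∈ A⁺`. -/
def C6 {α : Type*} (W₀ : List α) : Set (List (α ⊕ Unit) × List (α ⊕ Unit)) :=
  {p | ∃ X₁ X₂ X₃ : List α, X₁ ≠ [] ∧ X₂ ≠ [] ∧ X₃ ≠ [] ∧
    W₀ = X₁ ++ X₂ ∧ W₀ = X₂ ++ X₃ ∧
    p = (Sum.inr () :: X₃.map Sum.inl, X₁.map Sum.inl ++ [Sum.inr ()])}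

/-- The rewriting system `R_S` over `B = A ∪ {s}`. -/
def RS {α : Type*} (R : Set (List α × List α)) (W₀ : List α) :
    Set (List (α ⊕ Unit) × List (α ⊕ Unit)) :=
  C1 R W₀ ∪ C2 W₀ ∪ C3 R W₀ ∪ C4 R W₀ ∪ C5 R W₀ ∪ C6 W₀


lemma aux_phiS_append {α : Type*} (W₀ : List α) (l m : List (α ⊕ Unit)) :
    phiS W₀ (l ++ m) = phiS W₀ l ++ phiS W₀ m := by simp [phiS]

lemma aux_phiS_rhoS {α : Type*} (W₀ : List α) (W : List α) :
    phiS W₀ (rhoS W₀ W) = W := by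
  have H : ∀ n (W : List α), W.length ≤ n → phiS W₀ (rhoS W₀ W) = W := by
    intro n
    induction n with
    | zero =>
      intro W hW
      have : W = [] := List.eq_nil_of_length_eq_zero (Nat.le_zero.mp hW)
      subst this; rw [rhoS]; simp [phiS]
    | succ n ih =>
      intro W hW
      rw [rhoS]
      split
      · rename_i h; subst h; simp [phiS]
      rename_i hne
      split
      · rename_i hsuf
        obtain ⟨T, hT⟩ := hsuf.2
        have hlen : W.length - W₀.length = T.length := by
          have := congrArg List.length hT
          simp at this; omega
        have htake : W.take (W.length - W₀.length) = T := by
          rw [hlen, ← hT, List.take_left]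
        rw [aux_phiS_append, htake]
        have hW0pos : 0 < W₀.length := List.length_pos_iff.mpr hsuf.1
        have hWpos : 0 < W.length := List.length_pos_iff.mpr hne
        have : T.length ≤ n := by
          have := congrArg List.length hT; simp at this; omega
        rw [ih T this]
        simp only [phiS, List.flatMap_cons, List.flatMap_nil, Sum.elim_inr, List.append_nil]
        exact hT
      · rename_i h2
        rw [aux_phiS_append, ih W.dropLast (by simp [List.length_dropLast]; omega)]
        simp only [phiS, List.flatMap_cons, List.flatMap_nil, Sum.elim_inl, List.append_nil]
        exact List.dropLast_append_getLast hne
  exact H W.length W le_rfl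

lemma aux_cancel3 {α : Type*} (a b c d : List α) (h : a ++ b ++ c = a ++ d ++ c) : b = d := by
  rw [List.append_assoc, List.append_assoc] at h
  exact List.append_cancel_right (List.append_cancel_left h)

lemma aux_step_ne {α : Type*} {R : Set (List α × List α)} (hN : Noetherian R)
    {X Y : List α} (hXY : (X, Y) ∈ R) : X ≠ Y := by
  intro he
  exact hN ⟨fun _ => X, fun _ => ⟨[], [], X, Y, hXY, by simp, by simpa using he⟩⟩

/-- **Lemma 3.6.** If `U' →_{R_S} V'` by one of the rules of the form (C1), (C3),
(C4) or (C5), then `φ(U') ≠ φ(V')`. -/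
theorem lemma_3_6 {α : Type*} (R : Set (List α × List α))
    (hαfin : Finite α) (hRfin : R.Finite) (hRWS : IsRWS R) (hcomp : CompleteRWS R)
    (W₀ : List α) (hW₀len : 1 < W₀.length) (hW₀irr : Irr R W₀)
    (U' V' : List (α ⊕ Unit)) (hU' : U' ≠ [])
    (h : Step (C1 R W₀ ∪ C3 R W₀ ∪ C4 R W₀ ∪ C5 R W₀) U' V') :
    phiS W₀ U' ≠ phiS W₀ V' := by
  have hW0ne : W₀ ≠ [] := by intro h; simp [h] at hW₀len
  obtain ⟨P₁, P₂, X', Y', hmem, hU, hV⟩ := h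
  have key : ∃ L M : List α, X' = rhoS W₀ L ∧ Y' = rhoS W₀ M ∧ L ≠ M := by
    rcases hmem with ((h1 | h3) | h4) | h5
    · obtain ⟨X, Y, hXY, hp⟩ := h1
      refine ⟨X, Y, congrArg Prod.fst hp, congrArg Prod.snd hp, aux_step_ne hcomp.1 hXY⟩
    · obtain ⟨X₁, X₂, Y₁, Z, Y₁', hX₁, hY₁, hR, hW, hsteps, hirr, hp⟩ := h3
      refine ⟨Z ++ X₁ ++ X₂, Y₁', congrArg Prod.fst hp, congrArg Prod.snd hp, ?_⟩
      intro he
      exact hirr.2 ⟨Z, X₁ ++ X₂, [], ⟨Y₁, hR⟩, by simp [← he]⟩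
    · obtain ⟨X₁, X₂, Y₁, Z, Y₁', hX₁, hY₁, hR, hW, hsteps, hirr, hp⟩ := h4
      refine ⟨X₂ ++ X₁ ++ Z, Y₁', congrArg Prod.fst hp, congrArg Prod.snd hp, ?_⟩
      intro he
      exact hirr.2 ⟨[], X₂ ++ X₁, Z, ⟨Y₁, hR⟩, by simp [← he]⟩
    · obtain ⟨X₁, X₂, X₃, X₄, X₅, Y₁, Y₁', hX₂, hX₄, hY₁, hR, hW1, hW2, hsteps, hirr, hp⟩ := h5
      refine ⟨X₁ ++ X₂ ++ X₃ ++ X₄ ++ X₅, Y₁', congrArg Prod.fst hp, congrArg Prod.snd hp, ?_⟩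
      intro he
      exact hirr.2 ⟨X₁, X₂ ++ X₃ ++ X₄, X₅, ⟨Y₁, hR⟩, by simp [← he]⟩
  obtain ⟨L, M, hX', hY', hLM⟩ := key
  intro heq
  rw [hU, hV, aux_phiS_append, aux_phiS_append, aux_phiS_append, aux_phiS_append,
    hX', hY', aux_phiS_rhoS, aux_phiS_rhoS] at heq
  exact hLM (aux_cancel3 _ _ _ _ heq)
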